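/- Let σ_{t-1}(x)² ≤ κ(x,x) ≤ 1 for all x, and σ > 0. Then for every t and x, σ_{t-1}(x)² ≤ C₁ σ² log(1 + σ^{-2} σ_{t-1}(x)²) where C₁ = σ^{-2}/log(1+σ^{-2}) ≥ 1. -/

import Mathlib

/-- GP posterior variance bound: if `σ_{t-1}(x)² ≤ κ(x,x) ≤ 1` and `σ > 0`,
then `σ_{t-1}(x)² ≤ C₁ σ² log (1 + σ⁻² σ_{t-1}(x)²)` with
`C₁ = σ⁻²/log(1+σ⁻²) ≥ 1`. -/
theorem stmt_18 {X : Type*} (σpost : ℕ → X → ℝ) (κ : X → X → ℝ) (σ : ℝ)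
    (hσ : 0 < σ)
    (hvar : ∀ t x, (σpost t x) ^ 2 ≤ κ x x) (hκ : ∀ x : X, κ x x ≤ 1) :
    (∀ t x, (σpost t x) ^ 2 ≤ (σ ^ (-2 : ℤ) / Real.log (1 + σ ^ (-2 : ℤ))) *
      σ ^ 2 * Real.log (1 + σ ^ (-2 : ℤ) * (σpost t x) ^ 2)) ∧
    1 ≤ σ ^ (-2 : ℤ) / Real.log (1 + σ ^ (-2 : ℤ)) := by
  set c : ℝ := σ ^ (-2 : ℤ) with hc
  have hcpos : 0 < c := by positivity
  have hlogpos : 0 < Real.log (1 + c) := Real.log_pos (by linarith)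
  constructor
  · intro t x
    set v : ℝ := (σpost t x) ^ 2 with hv
    have hv0 : 0 ≤ v := sq_nonneg _
    have hv1 : v ≤ 1 := (hvar t x).trans (hκ x)
    -- Bernoulli: (1+c)^v ≤ 1 + v*c
    have hb : (1 + c) ^ v ≤ 1 + v * c :=
      rpow_one_add_le_one_add_mul_self (by linarith) hv0 hv1
    have hlog : v * Real.log (1 + c) ≤ Real.log (1 + c * v) := by
      have := Real.log_le_log (by positivity) hb
      rwa [Real.log_rpow (by linarith), mul_comm v c] at this
    have hcσ : c * σ ^ 2 = 1 := by
      rw [hc]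
      rw [show ((-2 : ℤ)) = -(2 : ℤ) by ring, zpow_neg]
      field_simp
    have key : v ≤ Real.log (1 + c * v) / Real.log (1 + c) :=
      (le_div_iff₀ hlogpos).mpr hlog
    calc v ≤ Real.log (1 + c * v) / Real.log (1 + c) := key
      _ = c / Real.log (1 + c) * σ ^ 2 * Real.log (1 + c * v) := by
          field_simp [hcσ]
          rw [mul_right_comm, hcσ, one_mul]
  · rw [le_div_iff₀ hlogpos, one_mul]
    have := Real.log_le_sub_one_of_pos (show (0:ℝ) < 1 + c by linarith)
    linarith
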